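/- Let n ≥ 1 and let γₙ : [0, bₙ] → ℝ × ℝⁿ be future-directed causal curves parametrized by Euclidean arclength, with γₙ(0) → x, γₙ(bₙ) → z and bₙ → b ∈ (0, +∞). Then there exist a subsequence γₖ and a future-directed causal curve γ : [0, b] → ℝ × ℝⁿ with γ(0) = x and γ(b) = z such that sup_{t ∈ [0, min(b, bₖ)]} ‖γ(t) − γₖ(t)‖ → 0 as k → ∞, and limsup_{k→∞} L(γₖ) ≤ L(γ). In particular z − x ∈ C and z ≠ x. (This is the Minkowski-space instance of the first bullet of case (2) of the paper's main Theorem 3.1.) -/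

import Mathlib

open Filter Set
open scoped BigOperators ENNReal

noncomputable section

/-- Minkowski space modeled as `ℝ × ℝⁿ` with the Euclidean norm,
i.e. `EuclideanSpace ℝ (Fin (n+1))` with time component `x 0`. -/
abbrev Mink (n : ℕ) : Type := EuclideanSpace ℝ (Fin (n + 1))

/-- The closed future causal cone `C = {x : x⁰ ≥ ‖x̄‖}`. -/
def causalCone (n : ℕ) : Set (Mink n) :=
  {x | Real.sqrt (∑ i : Fin n, x i.succ ^ 2) ≤ x 0}

/-- The Lorentzian quadratic form `q(x) = (x⁰)² − ‖x̄‖²`. -/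
def qform (n : ℕ) (x : Mink n) : ℝ :=
  x 0 ^ 2 - ∑ i : Fin n, x i.succ ^ 2

/-- `γ` is a future-directed causal curve on the set `s`. -/
def FDCausal (n : ℕ) (γ : ℝ → Mink n) (s : Set ℝ) : Prop :=
  ∀ ⦃t₁⦄, t₁ ∈ s → ∀ ⦃t₂⦄, t₂ ∈ s → t₁ < t₂ →
    γ t₂ - γ t₁ ∈ causalCone n ∧ γ t₂ ≠ γ t₁

/-- The Lorentzian length of `γ` on `[a, b]`: the infimum over finite partitions
`a = t₀ < t₁ < ⋯ < t_m = b` of `Σᵢ √(q(γ(tᵢ₊₁) − γ(tᵢ)))`. -/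
def LLength (n : ℕ) (γ : ℝ → Mink n) (a b : ℝ) : ℝ :=
  sInf { L : ℝ | ∃ (m : ℕ) (t : Fin (m + 1) → ℝ), StrictMono t ∧ t 0 = a ∧
    t (Fin.last m) = b ∧
    L = ∑ i : Fin m, Real.sqrt (qform n (γ (t i.succ) - γ (t i.castSucc))) }

def LLengthSet (n : ℕ) (γ : ℝ → Mink n) (a b : ℝ) : Set ℝ :=
  { L : ℝ | ∃ (m : ℕ) (t : Fin (m + 1) → ℝ), StrictMono t ∧ t 0 = a ∧
    t (Fin.last m) = b ∧
    L = ∑ i : Fin m, Real.sqrt (qform n (γ (t i.succ) - γ (t i.castSucc))) }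

lemma LLength_eq_sInf (n : ℕ) (γ : ℝ → Mink n) (a b : ℝ) :
    LLength n γ a b = sInf (LLengthSet n γ a b) := rfl

namespace LCT
variable {n : ℕ}

lemma zero_mem_cone : (0 : Mink n) ∈ causalCone n := by
  simp [causalCone]

lemma cone_time_nonneg {y : Mink n} (hy : y ∈ causalCone n) : 0 ≤ y 0 :=
  le_trans (Real.sqrt_nonneg _) hy

lemma sub_apply (y z : Mink n) (i : Fin (n+1)) : (y - z) i = y i - z i := rfl

lemma norm_sq_eq (y : Mink n) : ‖y‖^2 = y 0 ^ 2 + ∑ i : Fin n, y i.succ ^ 2 := by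
  rw [EuclideanSpace.norm_eq, Real.sq_sqrt (by positivity)]
  simp [Fin.sum_univ_succ, sq_abs]

lemma norm_le_of_cone {y : Mink n} (hy : y ∈ causalCone n) : ‖y‖ ≤ Real.sqrt 2 * y 0 := by
  have h0 := cone_time_nonneg hy
  have hy' : Real.sqrt (∑ i : Fin n, y i.succ ^ 2) ≤ y 0 := hy
  have h1 : ∑ i : Fin n, y i.succ ^ 2 ≤ y 0 ^ 2 := by
    nlinarith [Real.sq_sqrt (show (0:ℝ) ≤ ∑ i : Fin n, y i.succ ^ 2 by positivity),
      Real.sqrt_nonneg (∑ i : Fin n, y i.succ ^ 2)]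
  have h2 : ‖y‖^2 ≤ 2 * y 0 ^ 2 := by
    rw [norm_sq_eq]; nlinarith
  have h3 : (Real.sqrt 2 * y 0)^2 = 2 * y 0 ^ 2 := by
    rw [mul_pow, Real.sq_sqrt (by norm_num : (0:ℝ) ≤ 2)]
  nlinarith [norm_nonneg y, Real.sqrt_nonneg (2:ℝ), mul_nonneg (Real.sqrt_nonneg 2) h0]

lemma continuous_time : Continuous (fun y : Mink n => y 0) :=
  (EuclideanSpace.proj (0 : Fin (n+1))).continuous

lemma continuous_spatial : Continuous (fun y : Mink n => ∑ i : Fin n, y i.succ ^ 2) := by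
  exact continuous_finset_sum _ fun i _ => ((EuclideanSpace.proj (i.succ : Fin (n+1))).continuous).pow 2

lemma isClosed_cone : IsClosed (causalCone n) :=
  isClosed_le (Real.continuous_sqrt.comp continuous_spatial) continuous_time

lemma continuous_sqrtq : Continuous (fun y : Mink n => Real.sqrt (qform n y)) := by
  apply Real.continuous_sqrt.comp
  exact (continuous_time.pow 2).sub continuous_spatial

lemma timeMono {γ : ℝ → Mink n} {s : Set ℝ} (h : FDCausal n γ s) {u v : ℝ}
    (hu : u ∈ s) (hv : v ∈ s) (huv : u ≤ v) : γ u 0 ≤ γ v 0 := by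
  rcases eq_or_lt_of_le huv with rfl | hlt
  · exact le_refl _
  · have := cone_time_nonneg (h hu hv hlt).1
    rw [sub_apply] at this; linarith


lemma dist_le_arc {γ : ℝ → Mink n} {β : ℝ}
    (harc : ∀ ⦃s s'⦄, s ∈ Set.Icc 0 β → s' ∈ Set.Icc 0 β → s ≤ s' →
      eVariationOn γ (Set.Icc s s') = ENNReal.ofReal (s' - s))
    {u v : ℝ} (hu : u ∈ Set.Icc (0:ℝ) β) (hv : v ∈ Set.Icc (0:ℝ) β) (huv : u ≤ v) :
    dist (γ u) (γ v) ≤ v - u := by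
  have h1 : edist (γ u) (γ v) ≤ eVariationOn γ (Set.Icc u v) :=
    eVariationOn.edist_le γ (left_mem_Icc.2 huv) (right_mem_Icc.2 huv)
  rw [harc hu hv huv] at h1
  rw [edist_dist] at h1
  exact (ENNReal.ofReal_le_ofReal_iff (by linarith)).1 h1

lemma time_growth {γ : ℝ → Mink n} {β : ℝ}
    (hc : FDCausal n γ (Set.Icc 0 β))
    (harc : ∀ ⦃s s'⦄, s ∈ Set.Icc 0 β → s' ∈ Set.Icc 0 β → s ≤ s' →
      eVariationOn γ (Set.Icc s s') = ENNReal.ofReal (s' - s))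
    {u v : ℝ} (hu : u ∈ Set.Icc (0:ℝ) β) (hv : v ∈ Set.Icc (0:ℝ) β) (huv : u ≤ v) :
    v - u ≤ Real.sqrt 2 * (γ v 0 - γ u 0) := by
  have hsub : Set.Icc u v ⊆ Set.Icc (0:ℝ) β := Set.Icc_subset_Icc hu.1 hv.2
  have key : eVariationOn γ (Set.Icc u v) ≤
      ENNReal.ofReal (Real.sqrt 2 * (γ v 0 - γ u 0)) := by
    rw [eVariationOn]
    apply iSup_le
    rintro ⟨N, w, hw, hws⟩
    have hwm : ∀ i, w i ∈ Set.Icc (0:ℝ) β := fun i => hsub (hws i)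
    have step : ∀ i, edist (γ (w (i+1))) (γ (w i)) ≤
        ENNReal.ofReal (Real.sqrt 2 * (γ (w (i+1)) 0 - γ (w i) 0)) := by
      intro i
      rcases eq_or_lt_of_le (hw (Nat.le_succ i)) with he | hlt
      · rw [he, edist_self]; exact bot_le
      · have hcone := (hc (hwm i) (hwm (i+1)) hlt).1
        rw [edist_dist, dist_eq_norm]
        apply ENNReal.ofReal_le_ofReal
        have := norm_le_of_cone hcone
        rw [sub_apply] at this
        simpa using this
    calc ∑ i ∈ Finset.range N, edist (γ (w (i+1))) (γ (w i))
        ≤ ∑ i ∈ Finset.range N, ENNReal.ofReal (Real.sqrt 2 * (γ (w (i+1)) 0 - γ (w i) 0)) :=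
          Finset.sum_le_sum fun i _ => step i
      _ = ENNReal.ofReal (∑ i ∈ Finset.range N, Real.sqrt 2 * (γ (w (i+1)) 0 - γ (w i) 0)) := by
          rw [ENNReal.ofReal_sum_of_nonneg]
          intro i _
          have := timeMono hc (hwm i) (hwm (i+1)) (hw (Nat.le_succ i))
          have h2 := Real.sqrt_nonneg 2
          nlinarith
      _ ≤ ENNReal.ofReal (Real.sqrt 2 * (γ v 0 - γ u 0)) := by
          apply ENNReal.ofReal_le_ofReal
          rw [← Finset.mul_sum, Finset.sum_range_sub (fun i => γ (w i) 0)]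
          have h1 : γ u 0 ≤ γ (w 0) 0 := timeMono hc hu (hwm 0) (hws 0).1
          have h2 : γ (w N) 0 ≤ γ v 0 := timeMono hc (hwm N) hv (hws N).2
          have h3 := Real.sqrt_nonneg 2
          nlinarith
  rw [harc hu hv huv] at key
  have hnn : 0 ≤ Real.sqrt 2 * (γ v 0 - γ u 0) := by
    have := timeMono hc hu hv huv
    have := Real.sqrt_nonneg 2
    nlinarith
  exact (ENNReal.ofReal_le_ofReal_iff hnn).1 key


lemma clamp_lip (b : ℝ) : LipschitzWith 1 (fun t : ℝ => max 0 (min t b)) := by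
  apply LipschitzWith.of_dist_le_mul
  intro s t
  simp only [NNReal.coe_one, one_mul, Real.dist_eq]
  calc |max 0 (min s b) - max 0 (min t b)| = |max (min s b) 0 - max (min t b) 0| := by
        rw [max_comm 0 _, max_comm 0 _]
    _ ≤ |min s b - min t b| := abs_max_sub_max_le_abs _ _ _
    _ = |min s b - min t b| := rfl
    _ ≤ max |s - t| |b - b| := abs_min_sub_min_le_max _ _ _ _
    _ ≤ |s - t| := by simp

lemma ascoli {b R : ℝ} (hb : 0 ≤ b) {g : ℕ → ℝ → Mink n}
    (hlip : ∀ m, LipschitzWith 1 (g m)) (hbd : ∀ m t, ‖g m t‖ ≤ R) :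
    ∃ φ : ℕ → ℕ, StrictMono φ ∧ ∃ f : ℝ → Mink n, LipschitzWith 1 f ∧
      ∀ ε > 0, ∃ N, ∀ k ≥ N, ∀ t ∈ Set.Icc (0:ℝ) b, dist (f t) (g (φ k) t) < ε := by
  set K := Set.Icc (0:ℝ) b
  -- the sequence as continuous maps on K
  have hlipK : ∀ m, LipschitzWith 1 (fun t : K => g m t) := fun m => by
    have := (hlip m).comp (LipschitzWith.subtype_val (fun x => x ∈ K))
    rw [one_mul] at this
    exact this
  set G : ℕ → C(K, Mink n) := fun m => ⟨fun t => g m t, (hlipK m).continuous⟩ with hG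
  set A : Set C(K, Mink n) := {F | LipschitzWith 1 (F : K → Mink n) ∧ ∀ t, ‖F t‖ ≤ R} with hA
  have hGA : ∀ m, G m ∈ A := fun m => ⟨hlipK m, fun t => hbd m t⟩
  have hAcpt : IsCompact A := by
    apply ArzelaAscoli.isCompact_of_equicontinuous
    · have himg : ContinuousMap.toFun '' A =
          {F : K → Mink n | (∀ s t : K, dist (F s) (F t) ≤ dist s t) ∧ ∀ t, ‖F t‖ ≤ R} := by
        ext F
        constructor
        · rintro ⟨F', ⟨h1, h2⟩, rfl⟩
          exact ⟨fun s t => by simpa using h1.dist_le_mul s t, h2⟩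
        · rintro ⟨h1, h2⟩
          have hl : LipschitzWith 1 F :=
            LipschitzWith.of_dist_le_mul (fun s t => by simpa using h1 s t)
          exact ⟨⟨F, hl.continuous⟩, ⟨hl, h2⟩, rfl⟩
      rw [himg]
      apply IsCompact.of_isClosed_subset (isCompact_univ_pi
        (fun _ : K => isCompact_closedBall (0 : Mink n) R))
      · have e1 : {F : K → Mink n | (∀ s t : K, dist (F s) (F t) ≤ dist s t) ∧ ∀ t, ‖F t‖ ≤ R}
            = (⋂ (s : K) (t : K), {F : K → Mink n | dist (F s) (F t) ≤ dist s t}) ∩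
              (⋂ (t : K), {F : K → Mink n | ‖F t‖ ≤ R}) := by
          ext F; simp [Set.mem_iInter, forall_and]
        rw [e1]
        apply IsClosed.inter
        · exact isClosed_iInter fun s => isClosed_iInter fun t =>
            isClosed_le ((continuous_apply s).dist (continuous_apply t)) continuous_const
        · exact isClosed_iInter fun t =>
            isClosed_le ((continuous_apply t).norm) continuous_const
      · rintro F ⟨h1, h2⟩
        intro t _
        exact mem_closedBall_zero_iff.2 (h2 t)
    · apply Metric.equicontinuous_of_continuity_modulus (fun t => t) tendsto_id
      rintro x y ⟨F, ⟨h1, _⟩⟩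
      simpa using h1.dist_le_mul x y
  obtain ⟨f, hfA, φ, hφ, hconv⟩ := hAcpt.tendsto_subseq hGA
  refine ⟨φ, hφ, fun t => f ⟨max 0 (min t b), ?_, ?_⟩, ?_, ?_⟩
  · exact le_max_left _ _
  · exact max_le hb (min_le_right _ _)
  · have := hfA.1.comp (LipschitzWith.subtype_mk (clamp_lip b)
      (fun t => ⟨le_max_left _ _, max_le hb (min_le_right _ _)⟩))
    rw [one_mul] at this; exact this
  · intro ε hε
    obtain ⟨N, hN⟩ := Metric.tendsto_atTop.1 hconv ε hε
    refine ⟨N, fun k hk t ht => ?_⟩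
    have h1 : (⟨max 0 (min t b), le_max_left _ _, max_le hb (min_le_right _ _)⟩ : K) = ⟨t, ht⟩ := by
      have : max 0 (min t b) = t := by
        rw [min_eq_left ht.2, max_eq_right ht.1]
      exact Subtype.ext this
    simp only [h1]
    calc dist (f ⟨t, ht⟩) (g (φ k) t) = dist (f ⟨t, ht⟩) (G (φ k) ⟨t, ht⟩) := rfl
      _ ≤ dist f (G (φ k)) := ContinuousMap.dist_apply_le_dist _
      _ = dist ((G ∘ φ) k) f := by rw [dist_comm]; rfl
      _ < ε := hN k hk


lemma llength_bddBelow (γ : ℝ → Mink n) (a c : ℝ) : BddBelow (LLengthSet n γ a c) := by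
  refine ⟨0, ?_⟩
  rintro L ⟨m, t, _, _, _, rfl⟩
  positivity

lemma llength_nonneg (γ : ℝ → Mink n) (a c : ℝ) : 0 ≤ LLength n γ a c := by
  apply Real.sInf_nonneg
  rintro L ⟨m, t, _, _, _, rfl⟩
  positivity

end LCT

/-- The Minkowski-space instance of the first bullet of case (2) of the limit curve
theorem: future-directed causal curves `γₙ : [0, bₙ] → ℝ × ℝⁿ` parametrized by
Euclidean arclength with `γₙ(0) → x`, `γₙ(bₙ) → z`, `bₙ → b ∈ (0, ∞)` admit a
subsequence converging to a future-directed causal curve `γ : [0, b] → ℝ × ℝⁿ`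
connecting `x` to `z`, with `limsup L(γₖ) ≤ L(γ)`; in particular `z − x ∈ C`, `z ≠ x`. -/
theorem limit_curve_two_endpoints_finite (n : ℕ) (hn : 1 ≤ n)
    (bn : ℕ → ℝ) (hbn : ∀ m, 0 ≤ bn m)
    (γn : ℕ → ℝ → Mink n)
    (hcausal : ∀ m, FDCausal n (γn m) (Set.Icc 0 (bn m)))
    (harc : ∀ m, ∀ ⦃s s'⦄, s ∈ Set.Icc 0 (bn m) → s' ∈ Set.Icc 0 (bn m) → s ≤ s' →
      eVariationOn (γn m) (Set.Icc s s') = ENNReal.ofReal (s' - s))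
    (x z : Mink n)
    (hx : Filter.Tendsto (fun m => γn m 0) Filter.atTop (nhds x))
    (hz : Filter.Tendsto (fun m => γn m (bn m)) Filter.atTop (nhds z))
    (b : ℝ) (hb : 0 < b)
    (hbconv : Filter.Tendsto bn Filter.atTop (nhds b)) :
    ∃ φ : ℕ → ℕ, StrictMono φ ∧ ∃ γ : ℝ → Mink n,
      FDCausal n γ (Set.Icc 0 b) ∧ γ 0 = x ∧ γ b = z ∧
      (∀ ε > (0 : ℝ), ∃ N : ℕ, ∀ k ≥ N,
        ∀ t ∈ Set.Icc 0 (min b (bn (φ k))), ‖γ t - γn (φ k) t‖ < ε) ∧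
      Filter.limsup (fun k => LLength n (γn (φ k)) 0 (bn (φ k))) Filter.atTop ≤
        LLength n γ 0 b ∧
      z - x ∈ causalCone n ∧ z ≠ x := by
  classical
  -- boundedness
  obtain ⟨Cx, hCx⟩ : ∃ C, ∀ m, ‖γn m 0‖ ≤ C := by
    obtain ⟨C, hC⟩ := (hx.norm.isBoundedUnder_le).bddAbove_range
    exact ⟨C, fun m => hC ⟨m, rfl⟩⟩
  obtain ⟨Cb, hCb⟩ : ∃ C, ∀ m, bn m ≤ C := by
    obtain ⟨C, hC⟩ := (hbconv.isBoundedUnder_le).bddAbove_range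
    exact ⟨C, fun m => hC ⟨m, rfl⟩⟩
  -- clamped curves
  set c : ℕ → ℝ → ℝ := fun m t => max 0 (min t (bn m)) with hc
  set g : ℕ → ℝ → Mink n := fun m t => γn m (c m t) with hgdef
  have hmemc : ∀ m t, c m t ∈ Set.Icc 0 (bn m) := fun m t =>
    ⟨le_max_left _ _, max_le (hbn m) (min_le_right _ _)⟩
  have hid : ∀ m t, t ∈ Set.Icc 0 (bn m) → c m t = t := fun m t ht => by
    simp only [hc]
    rw [min_eq_left ht.2, max_eq_right ht.1]
  have hdistarc : ∀ m, ∀ u v, u ∈ Set.Icc 0 (bn m) → v ∈ Set.Icc 0 (bn m) →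
      dist (γn m u) (γn m v) ≤ |u - v| := by
    intro m u v hu hv
    rcases le_total u v with h | h
    · rw [abs_sub_comm, abs_of_nonneg (by linarith)]
      exact LCT.dist_le_arc (harc m) hu hv h
    · rw [abs_of_nonneg (by linarith), dist_comm]
      exact LCT.dist_le_arc (harc m) hv hu h
  have hlipg : ∀ m, LipschitzWith 1 (g m) := by
    intro m
    apply LipschitzWith.of_dist_le_mul
    intro s t
    simp only [NNReal.coe_one, one_mul]
    calc dist (g m s) (g m t) ≤ |c m s - c m t| :=
          hdistarc m _ _ (hmemc m s) (hmemc m t)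
      _ ≤ 1 * dist s t := by
          simpa [Real.dist_eq] using (LCT.clamp_lip (bn m)).dist_le_mul s t
      _ = dist s t := one_mul _
  have hbdg : ∀ m t, ‖g m t‖ ≤ Cx + Cb := by
    intro m t
    calc ‖g m t‖ = dist (g m t) 0 := (dist_zero_right _).symm
      _ ≤ dist (g m t) (γn m 0) + dist (γn m 0) 0 := dist_triangle _ _ _
      _ ≤ |c m t - 0| + ‖γn m 0‖ := by
          rw [dist_zero_right]
          exact add_le_add_left (hdistarc m _ _ (hmemc m t) (⟨le_refl 0, hbn m⟩)) _
      _ ≤ Cb + Cx := by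
          have h1 := (hmemc m t).1
          have h2 := (hmemc m t).2
          have := hCb m; have := hCx m
          rw [sub_zero, abs_of_nonneg h1]
          linarith
      _ = Cx + Cb := by ring
  obtain ⟨φ, hφ, f, hflip, hunif⟩ := LCT.ascoli hb.le hlipg hbdg
  set β : ℕ → ℝ := fun k => bn (φ k) with hβdef
  set δ : ℕ → ℝ → Mink n := fun k => γn (φ k) with hδdef
  have hβ : Tendsto β atTop (nhds b) := hbconv.comp hφ.tendsto_atTop
  -- pointwise convergence on [0,b]
  have hptconv : ∀ t ∈ Set.Icc (0:ℝ) b, Tendsto (fun k => g (φ k) t) atTop (nhds (f t)) := by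
    intro t ht
    rw [Metric.tendsto_atTop]
    intro ε hε
    obtain ⟨N, hN⟩ := hunif ε hε
    exact ⟨N, fun k hk => by rw [dist_comm]; exact hN k hk t ht⟩
  have hcφ : ∀ k t, 0 ≤ t → c (φ k) t = min t (β k) := by
    intro k t ht
    simp only [hc]
    exact max_eq_right (le_min ht (hbn _))
  -- causality of the limit
  have hFD : FDCausal n f (Set.Icc 0 b) := by
    intro t₁ ht₁ t₂ ht₂ hlt
    have hco1 := hptconv t₁ ht₁
    have hco2 := hptconv t₂ ht₂
    have hsub : Tendsto (fun k => g (φ k) t₂ - g (φ k) t₁) atTop (nhds (f t₂ - f t₁)) :=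
      hco2.sub hco1
    have hcmono : ∀ k, c (φ k) t₁ ≤ c (φ k) t₂ := by
      intro k
      simp only [hc]
      exact max_le_max (le_refl 0) (min_le_min hlt.le (le_refl _))
    have hmem : ∀ k, g (φ k) t₂ - g (φ k) t₁ ∈ causalCone n := by
      intro k
      rcases eq_or_lt_of_le (hcmono k) with he | hl
      · have : g (φ k) t₂ = g (φ k) t₁ := by simp only [hgdef]; rw [he]
        rw [this, sub_self]
        exact LCT.zero_mem_cone
      · exact ((hcausal (φ k)) (hmemc _ _) (hmemc _ _) hl).1
    have hmemlim : f t₂ - f t₁ ∈ causalCone n :=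
      LCT.isClosed_cone.mem_of_tendsto hsub (Eventually.of_forall hmem)
    have hgrow : ∀ k, min t₂ (β k) - min t₁ (β k) ≤
        Real.sqrt 2 * (g (φ k) t₂ 0 - g (φ k) t₁ 0) := by
      intro k
      have h := LCT.time_growth (hcausal (φ k)) (harc (φ k)) (hmemc (φ k) t₁)
        (hmemc (φ k) t₂) (hcmono k)
      rw [hcφ k t₁ ht₁.1, hcφ k t₂ ht₂.1] at h
      simpa only [hgdef, hcφ k t₁ ht₁.1, hcφ k t₂ ht₂.1] using h
    have hlhs : Tendsto (fun k => min t₂ (β k) - min t₁ (β k)) atTop (nhds (t₂ - t₁)) := by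
      have l2 : Tendsto (fun k => min t₂ (β k)) atTop (nhds (min t₂ b)) :=
        tendsto_const_nhds.min hβ
      have l1 : Tendsto (fun k => min t₁ (β k)) atTop (nhds (min t₁ b)) :=
        tendsto_const_nhds.min hβ
      rw [min_eq_left ht₂.2] at l2
      rw [min_eq_left ht₁.2] at l1
      exact l2.sub l1
    have hrhs : Tendsto (fun k => Real.sqrt 2 * (g (φ k) t₂ 0 - g (φ k) t₁ 0)) atTop
        (nhds (Real.sqrt 2 * (f t₂ 0 - f t₁ 0))) := by
      have e2 : Tendsto (fun k => g (φ k) t₂ 0) atTop (nhds (f t₂ 0)) :=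
        (LCT.continuous_time.tendsto _).comp hco2
      have e1 : Tendsto (fun k => g (φ k) t₁ 0) atTop (nhds (f t₁ 0)) :=
        (LCT.continuous_time.tendsto _).comp hco1
      exact (e2.sub e1).const_mul _
    have hle : t₂ - t₁ ≤ Real.sqrt 2 * (f t₂ 0 - f t₁ 0) :=
      le_of_tendsto_of_tendsto' hlhs hrhs hgrow
    refine ⟨hmemlim, fun heq => ?_⟩
    rw [heq, sub_self, mul_zero] at hle
    linarith
  -- endpoints
  have h0x : f 0 = x := by
    have h1 : Tendsto (fun k => g (φ k) 0) atTop (nhds x) := by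
      have : (fun k => g (φ k) 0) = fun k => γn (φ k) 0 := by
        funext k
        simp only [hgdef]
        rw [hid (φ k) 0 ⟨le_refl 0, hbn _⟩]
      rw [this]
      exact hx.comp hφ.tendsto_atTop
    exact tendsto_nhds_unique (hptconv 0 ⟨le_refl 0, hb.le⟩) h1
  have hδβ : Tendsto (fun k => δ k (β k)) atTop (nhds z) := hz.comp hφ.tendsto_atTop
  have hbz : f b = z := by
    have habs : Tendsto (fun k => |β k - b|) atTop (nhds 0) := by
      have := (hβ.sub (tendsto_const_nhds (x := b))).abs
      simpa using this
    have hdist0 : Tendsto (fun k => dist (δ k (β k)) (g (φ k) b)) atTop (nhds 0) := by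
      apply squeeze_zero (fun k => dist_nonneg) (fun k => ?_) habs
      have hcb' : c (φ k) b = min b (β k) := hcφ k b hb.le
      calc dist (δ k (β k)) (g (φ k) b) = dist (γn (φ k) (β k)) (γn (φ k) (c (φ k) b)) := rfl
        _ ≤ |β k - c (φ k) b| := hdistarc (φ k) _ _ ⟨hbn _, le_refl _⟩ (hmemc _ _)
        _ ≤ |β k - b| := by
            rw [hcb']
            rcases le_total (β k) b with h | h
            · rw [min_eq_right h]; simp
            · rw [min_eq_left h]
    have h1 : Tendsto (fun k => g (φ k) b) atTop (nhds z) := hδβ.congr_dist hdist0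
    exact tendsto_nhds_unique (hptconv b ⟨hb.le, le_refl b⟩) h1
  -- uniform convergence statement
  have huc : ∀ ε > (0:ℝ), ∃ N : ℕ, ∀ k ≥ N,
      ∀ t ∈ Set.Icc 0 (min b (β k)), ‖f t - δ k t‖ < ε := by
    intro ε hε
    obtain ⟨N, hN⟩ := hunif ε hε
    refine ⟨N, fun k hk t ht => ?_⟩
    have ht' : t ∈ Set.Icc (0:ℝ) b := ⟨ht.1, le_trans ht.2 (min_le_left _ _)⟩
    have htk : t ∈ Set.Icc (0:ℝ) (β k) := ⟨ht.1, le_trans ht.2 (min_le_right _ _)⟩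
    have : δ k t = g (φ k) t := by
      simp only [hgdef]
      rw [hid (φ k) t htk]
    rw [← dist_eq_norm, this]
    exact hN k hk t ht'
  -- limsup inequality
  have hcobdd : IsCoboundedUnder (· ≤ ·) atTop (fun k => LLength n (δ k) 0 (β k)) :=
    Filter.isCoboundedUnder_le_of_le atTop (fun k => LCT.llength_nonneg _ _ _)
  have hlimsup : Filter.limsup (fun k => LLength n (δ k) 0 (β k)) atTop ≤ LLength n f 0 b := by
    apply le_of_forall_pos_le_add
    intro ε hε
    have hne : (LLengthSet n f 0 b).Nonempty := by
      refine ⟨_, 1, (fun i => if i = 0 then 0 else b), ?_, ?_, ?_, rfl⟩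
      · intro i j hij
        have hj : j ≠ 0 := by
          rintro rfl
          exact absurd hij (Fin.not_lt_zero i)
        have hi : i = 0 := by
          apply Fin.ext
          have h1 : i.val < j.val := hij
          have h2 : j.val < 2 := j.isLt
          omega
        subst hi
        show (if (0 : Fin 2) = 0 then (0:ℝ) else b) < (if j = 0 then (0:ℝ) else b)
        rw [if_pos rfl, if_neg hj]
        exact hb
      · show (if (0 : Fin 2) = 0 then (0:ℝ) else b) = 0
        exact if_pos rfl
      · show (if (Fin.last 1 : Fin 2) = 0 then (0:ℝ) else b) = b
        rw [if_neg (by decide)]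
    obtain ⟨L, hLmem, hLlt⟩ := Real.lt_sInf_add_pos hne hε
    obtain ⟨m, t, hmono, h0, hlast, rfl⟩ := hLmem
    have hm : 0 < m := by
      rcases Nat.eq_zero_or_pos m with rfl | hm
      · exfalso
        have : t (Fin.last 0) = t 0 := rfl
        rw [hlast, h0] at this
        linarith
      · exact hm
    have h0ne : (0 : Fin (m+1)) ≠ Fin.last m := by
      intro h
      have := congrArg Fin.val h
      simp [Fin.last] at this
      omega
    set i₀ : Fin (m+1) := ⟨m-1, by omega⟩ with hi₀
    have hi₀lt : i₀ < Fin.last m := by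
      rw [Fin.lt_def]
      simp [hi₀, Fin.last]
      omega
    have hi₀b : t i₀ < b := by
      rw [← hlast]
      exact hmono hi₀lt
    have htmax : ∀ j : Fin (m+1), j ≠ Fin.last m → t j ≤ t i₀ := by
      intro j hj
      apply hmono.monotone
      rw [Fin.le_def]
      have h1 : j.val < m + 1 := j.isLt
      have h2 : j.val ≠ m := fun h => hj (Fin.ext (by simp [Fin.last, h]))
      simp [hi₀]
      omega
    have ht0le : ∀ j, (0:ℝ) ≤ t j := fun j => h0 ▸ hmono.monotone (Fin.zero_le j)
    have htleb : ∀ j, t j ≤ b := fun j => hlast ▸ hmono.monotone (Fin.le_last j)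
    have hco : ∀ j : Fin (m+1),
        Tendsto (fun k => δ k (if j = Fin.last m then β k else t j)) atTop
          (nhds (f (t j))) := by
      intro j
      by_cases hj : j = Fin.last m
      · simp only [if_pos hj]
        have : f (t j) = z := by rw [hj, hlast, hbz]
        rw [this]
        exact hδβ
      · simp only [if_neg hj]
        have hev : ∀ᶠ k in atTop, g (φ k) (t j) = δ k (t j) := by
          filter_upwards [hβ.eventually (eventually_gt_nhds hi₀b)] with k hk
          simp only [hgdef]
          rw [hid (φ k) (t j) ⟨ht0le j, le_of_lt (lt_of_le_of_lt (htmax j hj) hk)⟩]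
        exact (hptconv (t j) ⟨ht0le j, htleb j⟩).congr' hev
    have hS : Tendsto (fun k => ∑ i : Fin m, Real.sqrt (qform n
        (δ k (if i.succ = Fin.last m then β k else t i.succ) -
         δ k (if i.castSucc = Fin.last m then β k else t i.castSucc)))) atTop
        (nhds (∑ i : Fin m, Real.sqrt (qform n (f (t i.succ) - f (t i.castSucc))))) := by
      apply tendsto_finset_sum
      intro i _
      exact (LCT.continuous_sqrtq.tendsto _).comp ((hco i.succ).sub (hco i.castSucc))
    have hevlt : ∀ᶠ k in atTop, LLength n (δ k) 0 (β k) ≤ LLength n f 0 b + ε := by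
      filter_upwards [hβ.eventually (eventually_gt_nhds hi₀b),
        hS.eventually_lt_const hLlt] with k hk1 hk2
      refine le_trans (csInf_le (LCT.llength_bddBelow _ _ _) ?_) hk2.le
      refine ⟨m, (fun j => if j = Fin.last m then β k else t j), ?_, ?_, ?_, rfl⟩
      · intro i j hij
        by_cases hjl : j = Fin.last m
        · have hine : i ≠ Fin.last m := by
            rintro rfl
            rw [hjl] at hij
            exact absurd hij (lt_irrefl _)
          simp only [if_neg hine, if_pos hjl]
          exact lt_of_le_of_lt (htmax i hine) hk1
        · have hine : i ≠ Fin.last m := by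
            rintro rfl
            exact absurd hij (not_lt.2 (Fin.le_last j))
          simp only [if_neg hine, if_neg hjl]
          exact hmono hij
      · show (if (0 : Fin (m+1)) = Fin.last m then β k else t 0) = 0
        rw [if_neg h0ne, h0]
      · show (if (Fin.last m : Fin (m+1)) = Fin.last m then β k else t (Fin.last m)) = β k
        exact if_pos rfl
    exact Filter.limsup_le_of_le hcobdd hevlt
  -- conclusion
  have hzx := hFD (Set.left_mem_Icc.2 hb.le) (Set.right_mem_Icc.2 hb.le) hb
  rw [h0x, hbz] at hzx
  exact ⟨φ, hφ, f, hFD, h0x, hbz, huc, hlimsup, hzx.1, hzx.2⟩
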